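/- Let μ be a *-distribution on ℂ⟨Z_l, Z_{l*}, Z_r, Z_{r*}⟩. If μ(Z_w) = 0 for every word w ∈ W⁺ that is not mixed alternating, then B_{χ_w}(Z_w) = 0 for every word w ∈ W⁺ that is not mixed alternating. -/

import Mathlib

open scoped BigOperators

/-- Rank realizing the χ-order: left indices in increasing order, then right indices
in decreasing order. `true` stands for `l`, `false` for `r`. -/
def chiRank {n : ℕ} (χ : Fin n → Bool) (i : Fin n) : ℕ :=
  if χ i then (i : ℕ) else 2 * n - (i : ℕ)

/-- The strict order `≺_χ`. -/
def chiLT {n : ℕ} (χ : Fin n → Bool) (i j : Fin n) : Prop :=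
  chiRank χ i < chiRank χ j

/-- A finset is a χ-interval iff it is order-convex for `≺_χ`. -/
def IsChiInterval {n : ℕ} (χ : Fin n → Bool) (V : Finset (Fin n)) : Prop :=
  ∀ i j k : Fin n, i ∈ V → k ∈ V → chiLT χ i j → chiLT χ j k → j ∈ V

/-- A set partition of `{1, …, n}` encoded as a finset of (nonempty) blocks. -/
def IsPartition {n : ℕ} (P : Finset (Finset (Fin n))) : Prop :=
  (∅ ∉ P) ∧ ∀ i : Fin n, ∃! V : Finset (Fin n), V ∈ P ∧ i ∈ V

open scoped Classical in
/-- The set of bi-interval partitions relative to χ. -/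
noncomputable def BIset {n : ℕ} (χ : Fin n → Bool) : Finset (Finset (Finset (Fin n))) :=
  Finset.univ.filter (fun P => IsPartition P ∧ ∀ V ∈ P, IsChiInterval χ V)

/-- `φ_V(a₁,…,aₙ)`: apply φ to the product of the `a_i`, `i ∈ V`, in increasing index order. -/
def phiV {A : Type*} [Monoid A] (φ : A → ℂ) {n : ℕ} (a : Fin n → A) (V : Finset (Fin n)) : ℂ :=
  φ ((V.sort (· ≤ ·)).map a).prod

/-- The Boolean (l,r)-cumulant `B_χ`. -/
noncomputable def Bcum {A : Type*} [Monoid A] (φ : A → ℂ) {n : ℕ} (χ : Fin n → Bool)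
    (a : Fin n → A) : ℂ :=
  ∑ P ∈ BIset χ, (-1 : ℂ) ^ (P.card - 1) * ∏ V ∈ P, phiV φ a V

/-- The list of indices `1, …, n` sorted in the `≺_χ` order. -/
def chiSorted {n : ℕ} (χ : Fin n → Bool) : List (Fin n) :=
  (List.finRange n).mergeSort (fun i j => chiRank χ i ≤ chiRank χ j)

/-- Letters of the alphabet `{l, l*, r, r*}`: first component `true` = left (`l`-type),
second component `true` = starred. -/
abbrev Letter := Bool × Bool

/-- The left/right shape of a word. -/
def chiW {n : ℕ} (w : Fin n → Letter) : Fin n → Bool := fun i => (w i).1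

/-- The monomial `Z_w` in the free algebra on the four generators. -/
noncomputable def Zword {n : ℕ} (w : Fin n → Letter) : FreeAlgebra ℂ Letter :=
  (List.ofFn (fun i => FreeAlgebra.ι ℂ (w i))).prod

/-- The monomial `Z_{w|_V}`, the letters of `w` at positions in `V`,
multiplied in increasing index order. -/
noncomputable def ZwordOn {n : ℕ} (w : Fin n → Letter) (V : Finset (Fin n)) :
    FreeAlgebra ℂ Letter :=
  ((V.sort (· ≤ ·)).map (fun i => FreeAlgebra.ι ℂ (w i))).prod

/-- The Boolean (l,r)-cumulant `B_{χ_w}(Z_w)` of a `*`-distribution `μ` at the word `w`. -/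
noncomputable def BcumW (μ : FreeAlgebra ℂ Letter → ℂ) {n : ℕ} (w : Fin n → Letter) : ℂ :=
  Bcum μ (chiW w) (fun i => FreeAlgebra.ι ℂ (w i))

/-- The sequence of star-parities of the letters of `w`, rearranged in the `≺_{χ_w}` order. -/
def wordStarSeq {n : ℕ} (w : Fin n → Letter) : List Bool :=
  (chiSorted (chiW w)).map (fun i => (w i).2)

/-- A word is alternating: even length, and in the rearranged word starred and unstarred
letters alternate (all `l`-letters automatically precede all `r`-letters in the
rearranged word). -/
def AlternatingW {n : ℕ} (w : Fin n → Letter) : Prop :=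
  Even n ∧ (wordStarSeq w).Chain' (· ≠ ·)

/-- `chunks` is the canonical factorization of the rearranged word of `w`: a concatenation
of nonempty consecutive blocks, each of alternating shape (even length, star-parities
alternating), with the classes (star-parity of the first letter) of consecutive blocks
distinct. -/
def IsCanonFact {n : ℕ} (w : Fin n → Letter) (chunks : List (List (Fin n))) : Prop :=
  chunks.flatten = chiSorted (chiW w) ∧
  (∀ c ∈ chunks, c ≠ [] ∧ Even c.length ∧ (c.map (fun i => (w i).2)).Chain' (· ≠ ·)) ∧
  chunks.Chain' (fun c c' =>
    (c.map (fun i => (w i).2)).head? ≠ (c'.map (fun i => (w i).2)).head?)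

/-- A word is mixed alternating if its rearranged word admits a canonical factorization
into blocks of alternating shape with alternating classes. -/
def MixedAlternatingW {n : ℕ} (w : Fin n → Letter) : Prop :=
  ∃ chunks : List (List (Fin n)), IsCanonFact w chunks


/-! ### Auxiliary lemmas -/

section Aux

/-- Abstract mixed-alternating predicate on boolean lists. -/
def MABool (L : List Bool) : Prop :=
  ∃ C : List (List Bool), C.flatten = L ∧
    (∀ c ∈ C, c ≠ [] ∧ Even c.length ∧ c.Chain' (· ≠ ·)) ∧
    C.Chain' (fun c c' => c.head? ≠ c'.head?)

lemma MABool_nil : MABool [] := ⟨[], by simp, by simp, by simp [List.Chain']⟩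

lemma alt_getLast? : ∀ (l : List Bool), l.Chain' (· ≠ ·) → ∀ b : Bool, l.head? = some b →
    l.getLast? = some (if Even l.length then !b else b)
  | [], _, b, hb => by simp at hb
  | [x], _, b, hb => by
    simp only [List.head?_cons, Option.some.injEq] at hb
    subst hb
    simp [Nat.even_add_one]
  | x :: y :: t, hc, b, hb => by
    simp only [List.head?_cons, Option.some.injEq] at hb
    subst hb
    simp only [List.Chain', List.isChain_cons_cons] at hc
    have hy : y = !x := by cases y <;> cases x <;> simp_all
    have IH := alt_getLast? (y :: t) hc.2 y rfl
    rw [List.getLast?_cons_cons, IH, hy]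
    rcases Nat.even_or_odd t.length with he | he
    · simp [List.length_cons, Nat.even_add_one, he, Nat.not_even_iff_odd,
        Nat.not_odd_iff_even]
    · simp [List.length_cons, Nat.even_add_one, Nat.not_even_iff_odd,
        Nat.not_odd_iff_even, Nat.not_even_iff_odd.2 he]

lemma MABool_cons_chunk {c : List Bool} {L : List Bool}
    (hne : c ≠ []) (hev : Even c.length) (hch : c.Chain' (· ≠ ·)) (hL : MABool L) :
    MABool (c ++ L) := by
  obtain ⟨C, hflat, hconds, hchain⟩ := hL
  obtain ⟨b, hb⟩ : ∃ b, c.head? = some b := by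
    cases c with
    | nil => exact absurd rfl hne
    | cons a t => exact ⟨a, rfl⟩
  cases C with
  | nil =>
    have hL0 : L = [] := by simpa using hflat.symm
    subst hL0
    exact ⟨[c], by simp, by simp [hne, hev, hch], by simp [List.Chain']⟩
  | cons d C' =>
    have hd := hconds d (by simp)
    by_cases hhead : c.head? = d.head?
    · refine ⟨(c ++ d) :: C', ?_, ?_, ?_⟩
      · simp only [List.flatten_cons] at hflat ⊢
        rw [List.append_assoc, hflat]
      · intro e he
        rcases List.mem_cons.1 he with rfl | he'
        · refine ⟨by simp [hne], ?_, ?_⟩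
          · rw [List.length_append]; exact hev.add hd.2.1
          · simp only [List.Chain', List.isChain_append]
            refine ⟨hch, hd.2.2, ?_⟩
            intro x hx y hy
            rw [alt_getLast? c hch b hb] at hx
            rw [← hhead, hb] at hy
            simp only [Option.mem_def, Option.some.injEq] at hx hy
            subst hx; subst hy
            simp [hev]
        · exact hconds e (by simp [he'])
      · simp only [List.Chain', List.isChain_cons] at hchain ⊢
        refine ⟨?_, hchain.2⟩
        intro y hy
        have h1 : (c ++ d).head? = d.head? := by
          cases c with
          | nil => exact absurd rfl hne
          | cons a t => simp only [List.cons_append, List.head?_cons]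
                        rw [← hhead]; rfl
        rw [h1]
        exact hchain.1 y hy
    · refine ⟨c :: d :: C', by simp [hflat], ?_, ?_⟩
      · intro e he
        rcases List.mem_cons.1 he with rfl | he'
        · exact ⟨hne, hev, hch⟩
        · exact hconds e he'
      · simp only [List.Chain', List.isChain_cons_cons]
        exact ⟨hhead, hchain⟩

lemma MABool_flatten_append : ∀ (C : List (List Bool)),
    (∀ c ∈ C, c ≠ [] ∧ Even c.length ∧ c.Chain' (· ≠ ·)) →
    ∀ L, MABool L → MABool (C.flatten ++ L)
  | [], _, L, hL => by simpa using hL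
  | c :: C, hc, L, hL => by
    have IH := MABool_flatten_append C (fun d hd => hc d (by simp [hd])) L hL
    have h2 := MABool_cons_chunk (hc c (by simp)).1 (hc c (by simp)).2.1
      (hc c (by simp)).2.2 IH
    simpa [List.flatten_cons, List.append_assoc] using h2

lemma MABool.append {L L' : List Bool} (h : MABool L) (h' : MABool L') :
    MABool (L ++ L') := by
  obtain ⟨C, hflat, hconds, -⟩ := h
  rw [← hflat]
  exact MABool_flatten_append C hconds L' h'

lemma exists_unflatten {α β : Type*} (f : α → β) :
    ∀ (B : List (List β)) (l : List α), l.map f = B.flatten →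
    ∃ I : List (List α), I.flatten = l ∧ I.map (List.map f) = B
  | [], l, h => by
    simp only [List.flatten_nil, List.map_eq_nil_iff] at h
    exact ⟨[], by simp [h], rfl⟩
  | b :: B, l, h => by
    rw [List.flatten_cons] at h
    obtain ⟨l₁, l₂, rfl, h1, h2⟩ := List.map_eq_append_iff.1 h
    obtain ⟨I, hI1, hI2⟩ := exists_unflatten f B l₂ h2
    exact ⟨l₁ :: I, by simp [hI1], by simp [h1, hI2]⟩

lemma mixedAlternating_iff_MABool {n : ℕ} (w : Fin n → Letter) :
    MixedAlternatingW w ↔ MABool (wordStarSeq w) := by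
  constructor
  · rintro ⟨C, hflat, hconds, hchain⟩
    refine ⟨C.map (List.map fun i => (w i).2), ?_, ?_, ?_⟩
    · rw [wordStarSeq, ← hflat, List.map_flatten]
    · intro c hc
      obtain ⟨d, hd, rfl⟩ := List.mem_map.1 hc
      obtain ⟨h1, h2, h3⟩ := hconds d hd
      exact ⟨by simpa using h1, by simpa using h2, h3⟩
    · simp only [List.Chain', List.isChain_map]; exact hchain
  · rintro ⟨C, hflat, hconds, hchain⟩
    obtain ⟨I, hI1, hI2⟩ := exists_unflatten (fun i => (w i).2) C (chiSorted (chiW w))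
      (by rw [hflat]; rfl)
    refine ⟨I, hI1, ?_, ?_⟩
    · intro c hc
      have hm : c.map (fun i => (w i).2) ∈ C := by
        rw [← hI2]; exact List.mem_map_of_mem hc
      obtain ⟨h1, h2, h3⟩ := hconds _ hm
      exact ⟨fun hnil => h1 (by simp [hnil]), by simpa using h2, h3⟩
    · rw [← hI2] at hchain; simp only [List.Chain', List.isChain_map] at hchain
      exact hchain

lemma chiRank_injective {n : ℕ} (χ : Fin n → Bool) : Function.Injective (chiRank χ) := by
  intro i j hij
  have hi := i.isLt; have hj := j.isLt
  unfold chiRank at hij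
  split_ifs at hij <;> (apply Fin.ext; omega)

lemma chiSorted_perm {n : ℕ} (χ : Fin n → Bool) :
    List.Perm (chiSorted χ) (List.finRange n) :=
  List.mergeSort_perm _ _

lemma chiSorted_nodup {n : ℕ} (χ : Fin n → Bool) : (chiSorted χ).Nodup :=
  (chiSorted_perm χ).nodup_iff.2 (List.nodup_finRange n)

lemma chiSorted_mem {n : ℕ} (χ : Fin n → Bool) (i : Fin n) : i ∈ chiSorted χ :=
  (chiSorted_perm χ).mem_iff.2 (List.mem_finRange i)

lemma chiSorted_pairwise {n : ℕ} (χ : Fin n → Bool) :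
    (chiSorted χ).Pairwise (chiLT χ) := by
  have h1 : (chiSorted χ).Pairwise (fun i j => chiRank χ i ≤ chiRank χ j) := by
    have hs := List.pairwise_mergeSort
      (le := fun i j : Fin n => decide (chiRank χ i ≤ chiRank χ j))
      (by intro a b c h1 h2; simp only [decide_eq_true_eq] at *; omega)
      (by intro a b; simp only [Bool.or_eq_true, decide_eq_true_eq]; omega)
      (List.finRange n)
    refine List.Pairwise.imp ?_ hs
    intro a b hab
    simpa using hab
  have h2 : (chiSorted χ).Pairwise (· ≠ ·) := chiSorted_nodup χ
  refine List.Pairwise.imp ?_ (h1.and h2)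
  rintro a b ⟨hle, hne⟩
  have : chiRank χ a ≠ chiRank χ b := fun hEq => hne (chiRank_injective χ hEq)
  unfold chiLT
  omega

lemma chiLT_asymm {n : ℕ} (χ : Fin n → Bool) : IsAntisymm (Fin n) (chiLT χ) :=
  ⟨fun a b h1 h2 => by unfold chiLT at h1 h2; omega⟩

lemma chiLT_emb {n m : ℕ} (χ : Fin n → Bool) (e : Fin m ↪o Fin n) (j k : Fin m) :
    chiLT (fun i => χ (e i)) j k ↔ chiLT χ (e j) (e k) := by
  have hj := j.isLt; have hk := k.isLt
  have hej := (e j).isLt; have hek := (e k).isLt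
  show (if χ (e j) then (j : ℕ) else 2 * m - j) < (if χ (e k) then (k : ℕ) else 2 * m - k) ↔
    (if χ (e j) then ((e j : Fin n) : ℕ) else 2 * n - (e j)) <
      (if χ (e k) then ((e k : Fin n) : ℕ) else 2 * n - (e k))
  rcases lt_trichotomy j k with hlt | heq | hlt
  · have h1 : (j : ℕ) < k := hlt
    have h2 : ((e j : Fin n) : ℕ) < e k := e.strictMono hlt
    split_ifs <;> omega
  · subst heq
    split_ifs <;> omega
  · have h1 : (k : ℕ) < j := hlt
    have h2 : ((e k : Fin n) : ℕ) < e j := e.strictMono hlt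
    split_ifs <;> omega

lemma chiSorted_map_emb {n : ℕ} (χ : Fin n → Bool) (V : Finset (Fin n)) :
    (chiSorted (fun j : Fin V.card => χ (V.orderEmbOfFin rfl j))).map (V.orderEmbOfFin rfl) =
      (chiSorted χ).filter (fun i => i ∈ V) := by
  set e := V.orderEmbOfFin rfl with he
  haveI := chiLT_asymm χ
  apply (fun hp h1 h2 => List.Perm.eq_of_pairwise' (r := chiLT χ) h1 h2 hp)
  · rw [List.perm_ext_iff_of_nodup
      (List.Nodup.map e.injective (chiSorted_nodup _)) ((chiSorted_nodup χ).filter _)]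
    intro x
    simp only [List.mem_map, List.mem_filter, decide_eq_true_eq]
    constructor
    · rintro ⟨j, -, rfl⟩
      exact ⟨chiSorted_mem χ _, by simpa [he] using Finset.orderEmbOfFin_mem V rfl j⟩
    · rintro ⟨-, hx⟩
      have hr : Set.range e = (V : Set (Fin n)) := Finset.range_orderEmbOfFin V rfl
      have : x ∈ Set.range e := by rw [hr]; exact hx
      obtain ⟨j, hj⟩ := this
      exact ⟨j, chiSorted_mem _ j, hj⟩
  · rw [List.pairwise_map]
    exact List.Pairwise.imp (fun hab => (chiLT_emb χ e _ _).1 hab) (chiSorted_pairwise _)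
  · exact (chiSorted_pairwise χ).filter _

lemma sort_eq_ofFn {n : ℕ} (V : Finset (Fin n)) :
    V.sort (· ≤ ·) = List.ofFn (fun j : Fin V.card => V.orderEmbOfFin rfl j) := by
  apply List.ext_getElem
  · simp
  · intro i h1 h2
    simp only [List.getElem_ofFn]
    rw [Finset.orderEmbOfFin_apply]
    rfl

lemma ZwordOn_eq {n : ℕ} (w : Fin n → Letter) (V : Finset (Fin n)) :
    ZwordOn w V = Zword (fun j : Fin V.card => w (V.orderEmbOfFin rfl j)) := by
  unfold ZwordOn Zword
  rw [sort_eq_ofFn, List.map_ofFn]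
  rfl

lemma wordStarSeq_restrict {n : ℕ} (w : Fin n → Letter) (V : Finset (Fin n)) :
    wordStarSeq (fun j : Fin V.card => w (V.orderEmbOfFin rfl j)) =
      ((chiSorted (chiW w)).filter (fun i => i ∈ V)).map (fun i => (w i).2) := by
  unfold wordStarSeq
  have hχ : chiW (fun j : Fin V.card => w (V.orderEmbOfFin rfl j)) =
      fun j : Fin V.card => (chiW w) (V.orderEmbOfFin rfl j) := rfl
  rw [hχ, ← chiSorted_map_emb (chiW w) V, List.map_map]
  rfl

lemma pairwise_split {α : Type*} {r : α → α → Prop} (p : α → Prop) [DecidablePred p] :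
    ∀ l : List α, l.Pairwise r → (∀ x ∈ l, ∀ y ∈ l, r x y → p y → p x) →
      l = l.filter (fun x => p x) ++ l.filter (fun x => ¬ p x)
  | [], _, _ => rfl
  | a :: t, hp, hdown => by
    rw [List.pairwise_cons] at hp
    by_cases ha : p a
    · have IH := pairwise_split p t hp.2
        (fun x hx y hy => hdown x (by simp [hx]) y (by simp [hy]))
      rw [List.filter_cons, List.filter_cons, if_pos (by simp [ha]), if_neg (by simp [ha]),
        List.cons_append]
      exact congrArg (a :: ·) IH
    · have hall : ∀ b ∈ t, ¬ p b := fun b hb hpb =>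
        ha (hdown a (by simp) b (by simp [hb]) (hp.1 b hb) hpb)
      have h1 : t.filter (fun x => p x) = [] :=
        List.filter_eq_nil_iff.2 (by simpa using hall)
      have h2 : t.filter (fun x => ¬ p x) = t :=
        List.filter_eq_self.2 (by simpa using hall)
      rw [List.filter_cons, List.filter_cons, if_neg (by simp [ha]), if_pos (by simp [ha]),
        h1, h2, List.nil_append]

lemma core_lemma {n : ℕ} (χ : Fin n → Bool) (f : Fin n → Bool) :
    ∀ Q : Finset (Finset (Fin n)), ∀ l : List (Fin n),
      l.Pairwise (chiLT χ) →
      (∀ x ∈ l, ∃! V : Finset (Fin n), V ∈ Q ∧ x ∈ V) →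
      (∀ V ∈ Q, IsChiInterval χ V) →
      (∀ V ∈ Q, MABool ((l.filter (fun i => i ∈ V)).map f)) →
      MABool (l.map f) := by
  intro Q
  induction Q using Finset.strongInduction with
  | _ Q ih =>
    intro l hl hcov hint hMA
    match l with
    | [] => exact MABool_nil
    | a :: t =>
      obtain ⟨V0, ⟨hV0Q, haV0⟩, huniq⟩ := hcov a (by simp)
      have hdown : ∀ x ∈ (a :: t), ∀ y ∈ (a :: t), chiLT χ x y → y ∈ V0 → x ∈ V0 := by
        intro x hx y hy hxy hyV
        rcases List.mem_cons.1 hx with rfl | hx'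
        · exact haV0
        · have hax : chiLT χ a x := (List.pairwise_cons.1 hl).1 x hx'
          exact hint V0 hV0Q a x y haV0 hyV hax hxy
      have hsplit := pairwise_split (fun i => i ∈ V0) (a :: t) hl hdown
      have hMA1 : MABool (((a :: t).filter (fun i => i ∈ V0)).map f) := hMA V0 hV0Q
      have hMA2 : MABool (((a :: t).filter (fun i => ¬ i ∈ V0)).map f) := by
        apply ih (Q.erase V0) (Finset.erase_ssubset hV0Q)
        · exact List.Pairwise.filter _ hl
        · intro x hx
          have hxl : x ∈ (a :: t) := List.mem_of_mem_filter hx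
          have hxV0 : x ∉ V0 := by
            have := List.of_mem_filter hx; simpa using this
          obtain ⟨V, ⟨hVQ, hxV⟩, hu⟩ := hcov x hxl
          have hVne : V ≠ V0 := fun hEq => hxV0 (hEq ▸ hxV)
          refine ⟨V, ⟨Finset.mem_erase.2 ⟨hVne, hVQ⟩, hxV⟩, ?_⟩
          rintro W ⟨hWQ, hxW⟩
          exact hu W ⟨(Finset.mem_erase.1 hWQ).2, hxW⟩
        · intro V hV; exact hint V (Finset.mem_erase.1 hV).2
        · intro V hV
          have hVQ := (Finset.mem_erase.1 hV).2
          have hVne := (Finset.mem_erase.1 hV).1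
          have key : ((a :: t).filter (fun i => ¬ i ∈ V0)).filter (fun i => i ∈ V) =
              (a :: t).filter (fun i => i ∈ V) := by
            conv_rhs => rw [hsplit]
            rw [List.filter_append]
            have hnil : ((a :: t).filter (fun i => i ∈ V0)).filter (fun i => i ∈ V) = [] := by
              rw [List.filter_eq_nil_iff]
              intro x hx hxV
              have hxl : x ∈ (a :: t) := List.mem_of_mem_filter hx
              have hxV0 : x ∈ V0 := by
                have := List.of_mem_filter hx; simpa using this
              obtain ⟨W, hW, hu⟩ := hcov x hxl
              have e1 := hu V ⟨hVQ, by simpa using hxV⟩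
              have e2 := hu V0 ⟨hV0Q, hxV0⟩
              exact hVne (e1.trans e2.symm)
            rw [hnil, List.nil_append]
          rw [key]
          exact hMA V hVQ
      have hmap : (a :: t).map f =
          ((a :: t).filter (fun i => i ∈ V0)).map f ++
            ((a :: t).filter (fun i => ¬ i ∈ V0)).map f := by
        conv_lhs => rw [hsplit]
        rw [List.map_append]
      rw [hmap]
      exact hMA1.append hMA2

end Aux

/-- If all moments of a `*`-distribution at non-mixed-alternating words vanish, then
all its Boolean (l,r)-cumulants at non-mixed-alternating words vanish. -/
theorem cumulants_vanish_of_moments_vanish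
    (μ : FreeAlgebra ℂ Letter →ₗ[ℂ] ℂ) (hμ1 : μ 1 = 1)
    (h : ∀ n : ℕ, 1 ≤ n → ∀ w : Fin n → Letter,
      ¬ MixedAlternatingW w → μ (Zword w) = 0) :
    ∀ n : ℕ, 1 ≤ n → ∀ w : Fin n → Letter,
      ¬ MixedAlternatingW w → BcumW (fun z => μ z) w = 0 := by
  intro n hn w hw
  unfold BcumW Bcum
  apply Finset.sum_eq_zero
  intro P hP
  have hP' : IsPartition P ∧ ∀ V ∈ P, IsChiInterval (chiW w) V := by
    simpa [BIset] using hP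
  obtain ⟨⟨hne, hcov⟩, hint⟩ := hP'
  have hex : ∃ V ∈ P,
      ¬ MABool (((chiSorted (chiW w)).filter (fun i => i ∈ V)).map (fun i => (w i).2)) := by
    by_contra hcon
    push_neg at hcon
    apply hw
    rw [mixedAlternating_iff_MABool]
    exact core_lemma (chiW w) (fun i => (w i).2) P (chiSorted (chiW w))
      (chiSorted_pairwise _) (fun x _ => hcov x) hint hcon
  obtain ⟨V, hVP, hVMA⟩ := hex
  have hzero : phiV (fun z => μ z) (fun i => FreeAlgebra.ι ℂ (w i)) V = 0 := by
    have hVcard : 1 ≤ V.card := by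
      rcases Finset.eq_empty_or_nonempty V with rfl | hV
      · exact absurd hVP hne
      · exact Finset.card_pos.2 hV
    have hwv : ¬ MixedAlternatingW (fun j : Fin V.card => w (V.orderEmbOfFin rfl j)) := by
      rw [mixedAlternating_iff_MABool, wordStarSeq_restrict]
      exact hVMA
    have hz := h V.card hVcard _ hwv
    rw [← ZwordOn_eq] at hz
    simpa [phiV, ZwordOn] using hz
  rw [Finset.prod_eq_zero hVP hzero, mul_zero]
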